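/- For every real x with 0 ≤ x ≤ 1/3, the Werner state ρ_Wer(x) is separable: there exist a finite family of 2×2 density matrices ρ_{A,p}, ρ_{B,p} and nonnegative reals w^p with Σ_p w^p = 1 such that ρ_Wer(x) = Σ_p w^p · (ρ_{A,p} ⊗ ρ_{B,p}). -/

import Mathlib

open Matrix Kronecker ComplexOrder

/-- The Werner state, as a 4×4 matrix with indices identified with pairs
`(a,b) ∈ {0,1}²` via `2a+b`. -/
noncomputable def werner (x : ℝ) : Matrix (Fin 2 × Fin 2) (Fin 2 × Fin 2) ℂ :=
  Matrix.of fun p q =>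
    (!![((1 - x : ℝ) : ℂ) / 4, 0, 0, 0;
        0, ((1 + x : ℝ) : ℂ) / 4, -((x : ℂ)) / 2, 0;
        0, -((x : ℂ)) / 2, ((1 + x : ℝ) : ℂ) / 4, 0;
        0, 0, 0, ((1 - x : ℝ) : ℂ) / 4] : Matrix (Fin 4) (Fin 4) ℂ)
      (finProdFinEquiv p) (finProdFinEquiv q)

noncomputable def sq2 : ℂ := ((Real.sqrt 2)⁻¹ : ℝ)

lemma sq2_mul : sq2 * sq2 = 1/2 := by
  unfold sq2
  rw [← Complex.ofReal_mul, ← mul_inv, Real.mul_self_sqrt (by norm_num)]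
  norm_num

lemma sq2_sq : sq2 ^ 2 = 1/2 := by rw [sq, sq2_mul]

lemma sq2_conj : (starRingEnd ℂ) sq2 = sq2 := Complex.conj_ofReal _

noncomputable def A0 : Matrix (Fin 2) (Fin 2) ℂ := !![1,0;0,0]
noncomputable def A1 : Matrix (Fin 2) (Fin 2) ℂ := !![0,0;0,1]
noncomputable def A2 : Matrix (Fin 2) (Fin 2) ℂ := !![1/2,1/2;1/2,1/2]
noncomputable def A3 : Matrix (Fin 2) (Fin 2) ℂ := !![1/2,-(1/2);-(1/2),1/2]
noncomputable def A4 : Matrix (Fin 2) (Fin 2) ℂ := !![1/2,-(Complex.I/2);Complex.I/2,1/2]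
noncomputable def A5 : Matrix (Fin 2) (Fin 2) ℂ := !![1/2,Complex.I/2;-(Complex.I/2),1/2]
noncomputable def A6 : Matrix (Fin 2) (Fin 2) ℂ := !![1/2,0;0,1/2]

noncomputable def mA : Fin 7 → Matrix (Fin 2) (Fin 2) ℂ := ![A0,A1,A2,A3,A4,A5,A6]
noncomputable def mB : Fin 7 → Matrix (Fin 2) (Fin 2) ℂ := ![A1,A0,A3,A2,A5,A4,A6]

@[simp] lemma mA0 : mA 0 = A0 := rfl
@[simp] lemma mA1 : mA 1 = A1 := rfl
@[simp] lemma mA2 : mA 2 = A2 := rfl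
@[simp] lemma mA3 : mA 3 = A3 := rfl
@[simp] lemma mA4 : mA 4 = A4 := rfl
@[simp] lemma mA5 : mA 5 = A5 := rfl
@[simp] lemma mA6 : mA 6 = A6 := rfl
@[simp] lemma mB0 : mB 0 = A1 := rfl
@[simp] lemma mB1 : mB 1 = A0 := rfl
@[simp] lemma mB2 : mB 2 = A3 := rfl
@[simp] lemma mB3 : mB 3 = A2 := rfl
@[simp] lemma mB4 : mB 4 = A5 := rfl
@[simp] lemma mB5 : mB 5 = A4 := rfl
@[simp] lemma mB6 : mB 6 = A6 := rfl

lemma psd0 : A0.PosSemidef := by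
  have h : A0 = (!![(1:ℂ),0;0,0])ᴴ * !![(1:ℂ),0;0,0] := by
    ext i j; fin_cases i <;> fin_cases j <;>
      simp [A0, Matrix.mul_apply, Fin.sum_univ_two]
  exact h ▸ Matrix.posSemidef_conjTranspose_mul_self _

lemma psd1 : A1.PosSemidef := by
  have h : A1 = (!![(0:ℂ),0;0,1])ᴴ * !![(0:ℂ),0;0,1] := by
    ext i j; fin_cases i <;> fin_cases j <;>
      simp [A1, Matrix.mul_apply, Fin.sum_univ_two]
  exact h ▸ Matrix.posSemidef_conjTranspose_mul_self _

lemma psd2 : A2.PosSemidef := by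
  have h : A2 = (!![sq2,sq2;0,0])ᴴ * !![sq2,sq2;0,0] := by
    ext i j; fin_cases i <;> fin_cases j <;>
      simp [A2, Matrix.mul_apply, Fin.sum_univ_two, sq2_conj, sq2_mul]
  exact h ▸ Matrix.posSemidef_conjTranspose_mul_self _

lemma psd3 : A3.PosSemidef := by
  have h : A3 = (!![sq2,-sq2;0,0])ᴴ * !![sq2,-sq2;0,0] := by
    ext i j; fin_cases i <;> fin_cases j <;>
      simp [A3, Matrix.mul_apply, Fin.sum_univ_two, sq2_conj, sq2_mul]
  exact h ▸ Matrix.posSemidef_conjTranspose_mul_self _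

lemma psd4 : A4.PosSemidef := by
  have h : A4 = (!![sq2,-(Complex.I*sq2);0,0])ᴴ * !![sq2,-(Complex.I*sq2);0,0] := by
    ext i j; fin_cases i <;> fin_cases j <;>
      simp [A4, Matrix.mul_apply, Fin.sum_univ_two, sq2_conj, sq2_mul, Complex.conj_I,
        mul_comm, mul_assoc, mul_left_comm] <;>
      ring_nf <;> simp [sq2_sq]
  exact h ▸ Matrix.posSemidef_conjTranspose_mul_self _

lemma psd5 : A5.PosSemidef := by
  have h : A5 = (!![sq2,Complex.I*sq2;0,0])ᴴ * !![sq2,Complex.I*sq2;0,0] := by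
    ext i j; fin_cases i <;> fin_cases j <;>
      simp [A5, Matrix.mul_apply, Fin.sum_univ_two, sq2_conj, sq2_mul, Complex.conj_I,
        mul_comm, mul_assoc, mul_left_comm] <;>
      ring_nf <;> simp [sq2_sq]
  exact h ▸ Matrix.posSemidef_conjTranspose_mul_self _

lemma psd6 : A6.PosSemidef := by
  have h : A6 = (!![sq2,0;0,sq2])ᴴ * !![sq2,0;0,sq2] := by
    ext i j; fin_cases i <;> fin_cases j <;>
      simp [A6, Matrix.mul_apply, Fin.sum_univ_two, sq2_conj, sq2_mul]
  exact h ▸ Matrix.posSemidef_conjTranspose_mul_self _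

lemma psdA (p : Fin 7) : (mA p).PosSemidef := by
  fin_cases p <;> simp <;>
    first
    | exact psd0 | exact psd1 | exact psd2 | exact psd3
    | exact psd4 | exact psd5 | exact psd6

lemma psdB (p : Fin 7) : (mB p).PosSemidef := by
  fin_cases p <;> simp <;>
    first
    | exact psd0 | exact psd1 | exact psd2 | exact psd3
    | exact psd4 | exact psd5 | exact psd6

lemma trA (p : Fin 7) : (mA p).trace = 1 := by
  fin_cases p <;>
    simp [A0,A1,A2,A3,A4,A5,A6, Matrix.trace, Fin.sum_univ_two] <;> norm_num

lemma trB (p : Fin 7) : (mB p).trace = 1 := by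
  fin_cases p <;>
    simp [A0,A1,A2,A3,A4,A5,A6, Matrix.trace, Fin.sum_univ_two] <;> norm_num

@[simp] lemma wern_00_00 (x : ℝ) : werner x (0,0) (0,0) = ((1 - x : ℝ) : ℂ) / 4 := rfl
@[simp] lemma wern_00_01 (x : ℝ) : werner x (0,0) (0,1) = (0 : ℂ) := rfl
@[simp] lemma wern_00_10 (x : ℝ) : werner x (0,0) (1,0) = (0 : ℂ) := rfl
@[simp] lemma wern_00_11 (x : ℝ) : werner x (0,0) (1,1) = (0 : ℂ) := rfl
@[simp] lemma wern_01_00 (x : ℝ) : werner x (0,1) (0,0) = (0 : ℂ) := rfl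
@[simp] lemma wern_01_01 (x : ℝ) : werner x (0,1) (0,1) = ((1 + x : ℝ) : ℂ) / 4 := rfl
@[simp] lemma wern_01_10 (x : ℝ) : werner x (0,1) (1,0) = -((x : ℂ)) / 2 := rfl
@[simp] lemma wern_01_11 (x : ℝ) : werner x (0,1) (1,1) = (0 : ℂ) := rfl
@[simp] lemma wern_10_00 (x : ℝ) : werner x (1,0) (0,0) = (0 : ℂ) := rfl
@[simp] lemma wern_10_01 (x : ℝ) : werner x (1,0) (0,1) = -((x : ℂ)) / 2 := rfl
@[simp] lemma wern_10_10 (x : ℝ) : werner x (1,0) (1,0) = ((1 + x : ℝ) : ℂ) / 4 := rfl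
@[simp] lemma wern_10_11 (x : ℝ) : werner x (1,0) (1,1) = (0 : ℂ) := rfl
@[simp] lemma wern_11_00 (x : ℝ) : werner x (1,1) (0,0) = (0 : ℂ) := rfl
@[simp] lemma wern_11_01 (x : ℝ) : werner x (1,1) (0,1) = (0 : ℂ) := rfl
@[simp] lemma wern_11_10 (x : ℝ) : werner x (1,1) (1,0) = (0 : ℂ) := rfl
@[simp] lemma wern_11_11 (x : ℝ) : werner x (1,1) (1,1) = ((1 - x : ℝ) : ℂ) / 4 := rfl

@[simp] lemma wernn_00_00 (x : ℝ) : werner x (0 : Fin 2 × Fin 2) (0 : Fin 2 × Fin 2) = ((1 - x : ℝ) : ℂ) / 4 := rfl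
@[simp] lemma wernn_00_01 (x : ℝ) : werner x (0 : Fin 2 × Fin 2) (0,1) = (0 : ℂ) := rfl
@[simp] lemma wernn_00_10 (x : ℝ) : werner x (0 : Fin 2 × Fin 2) (1,0) = (0 : ℂ) := rfl
@[simp] lemma wernn_00_11 (x : ℝ) : werner x (0 : Fin 2 × Fin 2) (1 : Fin 2 × Fin 2) = (0 : ℂ) := rfl
@[simp] lemma wernn_01_00 (x : ℝ) : werner x (0,1) (0 : Fin 2 × Fin 2) = (0 : ℂ) := rfl
@[simp] lemma wernn_01_01 (x : ℝ) : werner x (0,1) (0,1) = ((1 + x : ℝ) : ℂ) / 4 := rfl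
@[simp] lemma wernn_01_10 (x : ℝ) : werner x (0,1) (1,0) = -((x : ℂ)) / 2 := rfl
@[simp] lemma wernn_01_11 (x : ℝ) : werner x (0,1) (1 : Fin 2 × Fin 2) = (0 : ℂ) := rfl
@[simp] lemma wernn_10_00 (x : ℝ) : werner x (1,0) (0 : Fin 2 × Fin 2) = (0 : ℂ) := rfl
@[simp] lemma wernn_10_01 (x : ℝ) : werner x (1,0) (0,1) = -((x : ℂ)) / 2 := rfl
@[simp] lemma wernn_10_10 (x : ℝ) : werner x (1,0) (1,0) = ((1 + x : ℝ) : ℂ) / 4 := rfl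
@[simp] lemma wernn_10_11 (x : ℝ) : werner x (1,0) (1 : Fin 2 × Fin 2) = (0 : ℂ) := rfl
@[simp] lemma wernn_11_00 (x : ℝ) : werner x (1 : Fin 2 × Fin 2) (0 : Fin 2 × Fin 2) = (0 : ℂ) := rfl
@[simp] lemma wernn_11_01 (x : ℝ) : werner x (1 : Fin 2 × Fin 2) (0,1) = (0 : ℂ) := rfl
@[simp] lemma wernn_11_10 (x : ℝ) : werner x (1 : Fin 2 × Fin 2) (1,0) = (0 : ℂ) := rfl
@[simp] lemma wernn_11_11 (x : ℝ) : werner x (1 : Fin 2 × Fin 2) (1 : Fin 2 × Fin 2) = ((1 - x : ℝ) : ℂ) / 4 := rfl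

noncomputable def wv (x : ℝ) : Fin 7 → ℝ :=
  ![x/2, x/2, x/2, x/2, x/2, x/2, 1 - 3*x]

@[simp] lemma wv0 (x : ℝ) : wv x 0 = x/2 := rfl
@[simp] lemma wv1 (x : ℝ) : wv x 1 = x/2 := rfl
@[simp] lemma wv2 (x : ℝ) : wv x 2 = x/2 := rfl
@[simp] lemma wv3 (x : ℝ) : wv x 3 = x/2 := rfl
@[simp] lemma wv4 (x : ℝ) : wv x 4 = x/2 := rfl
@[simp] lemma wv5 (x : ℝ) : wv x 5 = x/2 := rfl
@[simp] lemma wv6 (x : ℝ) : wv x 6 = 1 - 3*x := rfl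

theorem stmt_13 (x : ℝ) (hx0 : 0 ≤ x) (hx : x ≤ 1 / 3) :
    ∃ (s : ℕ) (w : Fin s → ℝ) (ρA ρB : Fin s → Matrix (Fin 2) (Fin 2) ℂ),
      (∀ p, 0 ≤ w p) ∧ (∑ p : Fin s, w p) = 1 ∧
      (∀ p, (ρA p).IsHermitian ∧ (ρA p).PosSemidef ∧ (ρA p).trace = 1) ∧
      (∀ p, (ρB p).IsHermitian ∧ (ρB p).PosSemidef ∧ (ρB p).trace = 1) ∧
      werner x = ∑ p : Fin s, (w p : ℂ) • (ρA p ⊗ₖ ρB p) := by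
  refine ⟨7, wv x, mA, mB, ?_, ?_,
    fun p => ⟨(psdA p).1, psdA p, trA p⟩,
    fun p => ⟨(psdB p).1, psdB p, trB p⟩, ?_⟩
  · intro p; fin_cases p <;> simp <;> linarith
  · simp [Fin.sum_univ_seven]; ring
  · ext ⟨i, j⟩ ⟨k, l⟩
    fin_cases i <;> fin_cases j <;> fin_cases k <;> fin_cases l <;>
    · simp only [Finset.sum_apply, Matrix.smul_apply, Matrix.kroneckerMap_apply,
        Fin.sum_univ_seven, wern_00_00, wern_00_01, wern_00_10, wern_00_11,
        wern_01_00, wern_01_01, wern_01_10, wern_01_11,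
        wern_10_00, wern_10_01, wern_10_10, wern_10_11,
        wern_11_00, wern_11_01, wern_11_10, wern_11_11,
        wernn_00_00, wernn_00_01, wernn_00_10, wernn_00_11, wernn_01_00, wernn_01_01, wernn_01_10, wernn_01_11, wernn_10_00, wernn_10_01, wernn_10_10, wernn_10_11, wernn_11_00, wernn_11_01, wernn_11_10, wernn_11_11,
        mA0, mA1, mA2, mA3, mA4, mA5, mA6, mB0, mB1, mB2, mB3, mB4, mB5, mB6,
        wv0, wv1, wv2, wv3, wv4, wv5, wv6]
      simp [A0, A1, A2, A3, A4, A5, A6, Complex.ext_iff] <;> push_cast <;> ring_nf
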